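/- Let 𝒪 = ℂ[[t]], and let V = ℂ^n with a flag of subspaces of dimensions determined by a partition n = n_1 + ... + n_k, with parabolic 𝔭 ⊂ gl_n stabilizing the flag and nilpotent radical 𝔫. Let m_0 ≤ m_1 ≤ ... ≤ m_{n-1} be the nondecreasing rearrangement of {1,...,n_1,...,1,...,n_k}. Then for every A ∈ 𝔫 + t·gl_n(𝒪), the j-th characteristic coefficient c_j(A) lies in t^{m_{j-1}}𝒪 for all 1 ≤ j ≤ n. -/

import Mathlib

open Matrix PowerSeries

open Finset Polynomial
set_option linter.unusedSectionVars false


variable {ι : Type*} [DecidableEq ι]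

lemma iterate_mem {T : Finset ι} {f : ι → ι} (hfT : ∀ i ∈ T, f i ∈ T) {x : ι} (hx : x ∈ T) :
    ∀ d, f^[d] x ∈ T := by
  intro d; induction d with
  | zero => simpa
  | succ d ih => rw [Function.iterate_succ_apply']; exact hfT _ ih

lemma comb_block (b : ι → ℕ) (T : Finset ι) (f : ι → ι)
    (hfT : ∀ i ∈ T, f i ∈ T) (hinj : Set.InjOn f T) (a : ℕ) :
    (T.filter (fun i => b i = a)).card ≤ (T.filter (fun i => ¬ b (f i) < b i)).card := by
  have hex : ∀ x : ι, ∃ i, ¬ b (f^[i+1] x) < b (f^[i] x) := by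
    intro x
    by_contra h
    push_neg at h
    have key : ∀ i, b (f^[i] x) + i ≤ b x := by
      intro i; induction i with
      | zero => simp
      | succ i ih => have := h i; omega
    have := key (b x + 1); omega
  set i₀ : ι → ℕ := fun x => Nat.find (hex x) with hi₀
  set φ : ι → ι := fun x => f^[i₀ x] x with hφ
  have hdec : ∀ x, ∀ i ≤ i₀ x, b (f^[i] x) + i ≤ b x := by
    intro x i hi
    induction i with
    | zero => simp
    | succ i ih =>
      have h1 : b (f^[i+1] x) < b (f^[i] x) := by
        have := Nat.find_min (hex x) (show i < i₀ x from hi)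
        simpa using this
      have := ih (le_of_lt (Nat.lt_of_succ_le hi))
      omega
  have hiterinj : ∀ d, ∀ x ∈ T, ∀ z ∈ T, f^[d] x = f^[d] z → x = z := by
    intro d
    induction d with
    | zero => intro x _ z _ h; simpa using h
    | succ d ih =>
      intro x hx z hz h
      rw [Function.iterate_succ_apply', Function.iterate_succ_apply'] at h
      exact ih x hx z hz (hinj (iterate_mem hfT hx d) (iterate_mem hfT hz d) h)
  apply Finset.card_le_card_of_injOn φ
  · intro x hx
    simp only [Finset.mem_coe, Finset.mem_filter] at hx ⊢
    refine ⟨iterate_mem hfT hx.1 _, ?_⟩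
    have := Nat.find_spec (hex x)
    rwa [Function.iterate_succ_apply'] at this
  · have main : ∀ x ∈ (T.filter (fun i => b i = a) : Finset ι),
        ∀ x' ∈ (T.filter (fun i => b i = a) : Finset ι),
        i₀ x ≤ i₀ x' → φ x = φ x' → x = x' := by
      intro x hx x' hx' hle heq
      simp only [Finset.mem_filter] at hx hx'
      have hd : f^[i₀ x] x = f^[i₀ x] (f^[i₀ x' - i₀ x] x') := by
        rw [← Function.iterate_add_apply]
        rw [hφ] at heq
        simp only at heq
        rw [heq]
        congr 1
        omega
      have hx2 : f^[i₀ x' - i₀ x] x' ∈ T := iterate_mem hfT hx'.1 _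
      have hxe := hiterinj (i₀ x) x hx.1 _ hx2 hd
      rcases Nat.eq_zero_or_pos (i₀ x' - i₀ x) with h0 | hpos
      · rw [h0] at hxe; simpa using hxe
      · exfalso
        have h2 := hdec x' (i₀ x' - i₀ x) (Nat.sub_le _ _)
        rw [← hxe] at h2
        omega
    intro x hx x' hx' heq
    simp only [Finset.coe_filter, Set.mem_setOf_eq] at hx hx'
    rcases le_total (i₀ x) (i₀ x') with h | h
    · exact main x (by simp [Finset.mem_filter, hx.1, hx.2]) x' (by simp [Finset.mem_filter, hx'.1, hx'.2]) h heq
    · exact (main x' (by simp [Finset.mem_filter, hx'.1, hx'.2]) x (by simp [Finset.mem_filter, hx.1, hx.2]) h heq.symm).symm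


lemma sorted_getD_le {l : List ℕ} (hs : l.Pairwise (· ≤ ·)) {i N : ℕ}
    (hc : i < l.countP (fun x => decide (x ≤ N))) : l.getD i 0 ≤ N := by
  by_contra h
  push_neg at h
  have hi : i < l.length := by
    by_contra hi
    push_neg at hi
    rw [List.getD_eq_default _ _ hi] at h
    omega
  have hdrop : ∀ x ∈ l.drop i, ¬ (x ≤ N) := by
    intro x hx
    rw [List.mem_iff_getElem] at hx
    obtain ⟨jj, hjj, rfl⟩ := hx
    have hjj' : i + jj < l.length := by
      rw [List.length_drop] at hjj; omega
    have hget : (l.drop i)[jj] = l[i + jj]'hjj' := List.getElem_drop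
    have hgd : l.getD i 0 = l[i] := List.getD_eq_getElem l 0 hi
    rw [hgd] at h
    have hle : l[i] ≤ l[i + jj]'hjj' := by
      rcases Nat.eq_zero_or_pos jj with h0 | hpos
      · subst h0; simp
      · exact (List.pairwise_iff_getElem.mp hs) i (i + jj) hi hjj' (by omega)
    rw [hget]
    omega
  have h1 : l.countP (fun x => decide (x ≤ N)) =
      (l.take i).countP (fun x => decide (x ≤ N)) + (l.drop i).countP (fun x => decide (x ≤ N)) := by
    rw [← List.countP_append, List.take_append_drop]
  have h2 : (l.drop i).countP (fun x => decide (x ≤ N)) = 0 := by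
    rw [List.countP_eq_zero]
    intro x hx
    simpa using hdrop x hx
  have h3 : (l.take i).countP (fun x => decide (x ≤ N)) ≤ i := by
    calc (l.take i).countP _ ≤ (l.take i).length := List.countP_le_length
    _ ≤ i := by simp
  omega


lemma fiber_card (k : ℕ) (nn : Fin k → ℕ) (a : Fin k) :
    (univ.filter (fun i : (a : Fin k) × Fin (nn a) => i.1 = a)).card = nn a := by
  have h : (univ.filter (fun i : (a : Fin k) × Fin (nn a) => i.1 = a)) =
      univ.map ⟨fun x : Fin (nn a) => ⟨a, x⟩, fun p q h => by simpa using h⟩ := by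
    ext ⟨a', x⟩
    simp only [mem_filter, mem_univ, true_and, mem_map, Function.Embedding.coeFn_mk]
    constructor
    · rintro rfl; exact ⟨x, rfl⟩
    · rintro ⟨w, hw⟩; cases hw; rfl
  rw [h, Finset.card_map, Finset.card_univ, Fintype.card_fin]

lemma countP_one (n N : ℕ) :
    Multiset.countP (fun x => x ≤ N) (Multiset.map (· + 1) (Multiset.range n)) = min N n := by
  rw [Multiset.countP_eq_card_filter]
  have : (Multiset.map (· + 1) (Multiset.range n)).filter (fun x => x ≤ N)
      = Multiset.map (· + 1) (Multiset.range (min N n)) := by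
    have hnd : ((Multiset.map (· + 1) (Multiset.range n)).filter (fun x => x ≤ N)).Nodup :=
      Multiset.Nodup.filter _ ((Multiset.nodup_range n).map (by intro p q h; simpa using h))
    have hnd2 : (Multiset.map (· + 1) (Multiset.range (min N n))).Nodup :=
      (Multiset.nodup_range _).map (by intro p q h; simpa using h)
    rw [Multiset.Nodup.ext hnd hnd2]
    intro x
    simp only [Multiset.mem_filter, Multiset.mem_map, Multiset.mem_range]
    constructor
    · rintro ⟨⟨w, hw, rfl⟩, hle⟩; exact ⟨w, by omega, rfl⟩
    · rintro ⟨w, hw, rfl⟩; exact ⟨⟨w, by omega, rfl⟩, by omega⟩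
  rw [this, Multiset.card_map, Multiset.card_range]

lemma countP_bind {α β : Type*} (s : Multiset α) (f : α → Multiset β) (p : β → Prop)
    [DecidablePred p] :
    Multiset.countP p (s.bind f) = (s.map (fun a => Multiset.countP p (f a))).sum := by
  induction s using Multiset.induction_on with
  | empty => simp
  | cons a s ih => simp [Multiset.cons_bind, Multiset.countP_add, ih]

lemma countP_multiset (k : ℕ) (nn : Fin k → ℕ) (N : ℕ) :
    Multiset.countP (fun x => x ≤ N)
      (Finset.univ.val.bind fun a : Fin k => Multiset.map (· + 1) (Multiset.range (nn a)))
      = ∑ a : Fin k, min N (nn a) := by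
  rw [countP_bind]
  rw [Finset.sum]
  congr 1
  apply Multiset.map_congr rfl
  intro a _
  exact countP_one (nn a) N



/-- Let `𝒪 = ℂ[[t]]` and let `𝔫 ⊂ gl_n` be the strictly block-lower-triangular nilpotent
radical for the block decomposition of `ℂ^n` of sizes `n_1, ..., n_k` (basis indexed by the
sigma type `(a : Fin k) × Fin (n a)`), and let `m_0 ≤ ... ≤ m_{n-1}` be the nondecreasing
rearrangement of `{1,...,n_1} ∪ ... ∪ {1,...,n_k}`. Then for every `A = y + t·z` with
`y ∈ 𝔫` a constant matrix and `z ∈ gl_n(𝒪)`, the `j`-th characteristic coefficient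
`c_j(A)` (the coefficient of `λ^{n-j}` in `det(λI - A)`) lies in `t^{m_{j-1}} 𝒪`
for all `1 ≤ j ≤ n`. -/
theorem charCoeff_dvd_of_parabolic (k : ℕ) (nn : Fin k → ℕ) (hn : ∀ a, 0 < nn a)
    (m : List ℕ)
    (hm : m = Multiset.sort
      (Finset.univ.val.bind fun a : Fin k => Multiset.map (· + 1) (Multiset.range (nn a))) (· ≤ ·))
    (y : Matrix ((a : Fin k) × Fin (nn a)) ((a : Fin k) × Fin (nn a)) ℂ)
    (hy : ∀ p q : (a : Fin k) × Fin (nn a), ¬ p.1 < q.1 → y p q = 0)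
    (z : Matrix ((a : Fin k) × Fin (nn a)) ((a : Fin k) × Fin (nn a)) (PowerSeries ℂ))
    (A : Matrix ((a : Fin k) × Fin (nn a)) ((a : Fin k) × Fin (nn a)) (PowerSeries ℂ))
    (hA : A = y.map (PowerSeries.C (R := ℂ)) + (PowerSeries.X : PowerSeries ℂ) • z)
    (j : ℕ) (hj : 1 ≤ j) (hjn : j ≤ Fintype.card ((a : Fin k) × Fin (nn a))) :
    (PowerSeries.X : PowerSeries ℂ) ^ (m.getD (j - 1) 0) ∣
      A.charpoly.coeff (Fintype.card ((a : Fin k) × Fin (nn a)) - j) := by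
  classical
  let ι := (a : Fin k) × Fin (nn a)
  set n := Fintype.card ((a : Fin k) × Fin (nn a)) with hn'
  set d := n - j with hd
  set mj := m.getD (j - 1) 0 with hmj
  -- divisibility of entries
  have hAdvd : ∀ p q : ι, ¬ p.1 < q.1 → (PowerSeries.X : PowerSeries ℂ) ∣ A p q := by
    intro p q h
    rw [hA]
    simp only [Matrix.add_apply, Matrix.map_apply, Matrix.smul_apply, smul_eq_mul,
      hy p q h, map_zero, zero_add]
    exact Dvd.intro _ rfl
  -- the key bound: for suitable T and σ, mj ≤ number of divisible factors
  have hkey : ∀ (T : Finset ι) (f : ι → ι), T.card = j → (∀ i ∈ T, f i ∈ T) →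
      Set.InjOn f T → mj ≤ (T.filter (fun i => ¬ (f i).1 < i.1)).card := by
    intro T f hTcard hfT hinj
    set N := (T.filter (fun i => ¬ (f i).1 < i.1)).card with hN
    have hblock : ∀ a : Fin k, (T.filter (fun i => i.1 = a)).card ≤ N := by
      intro a
      have hcb := comb_block (fun i => ((i.1 : Fin k) : ℕ)) T f hfT hinj (a : ℕ)
      have e1 : T.filter (fun i => ((i.1 : Fin k) : ℕ) = (a : ℕ)) =
          T.filter (fun i => i.1 = a) := by
        apply Finset.filter_congr
        intro i _
        exact Fin.val_inj
      have e2 : T.filter (fun i => ¬ ((f i).1 : ℕ) < (i.1 : ℕ)) =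
          T.filter (fun i => ¬ (f i).1 < i.1) := by
        apply Finset.filter_congr
        intro i _
        exact not_congr Fin.lt_def.symm
      rw [e1, e2] at hcb
      exact hcb
    have hfiber : ∀ a : Fin k, (T.filter (fun i => i.1 = a)).card ≤ min N (nn a) := by
      intro a
      refine le_min (hblock a) ?_
      calc (T.filter (fun i => i.1 = a)).card
          ≤ (univ.filter (fun i : (a : Fin k) × Fin (nn a) => i.1 = a)).card :=
            Finset.card_le_card (Finset.filter_subset_filter _ (Finset.subset_univ T))
        _ = nn a := fiber_card k nn a
    have hsum : T.card = ∑ a : Fin k, (T.filter (fun i => i.1 = a)).card :=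
      Finset.card_eq_sum_card_fiberwise (fun x _ => Finset.mem_univ x.1)
    have hjN : j ≤ ∑ a : Fin k, min N (nn a) := by
      rw [← hTcard, hsum]
      exact Finset.sum_le_sum (fun a _ => hfiber a)
    have hms : m.Pairwise (· ≤ ·) := by rw [hm]; exact Multiset.pairwise_sort _ _
    have hcount : j ≤ m.countP (fun x => decide (x ≤ N)) := by
      have hc2 : m.countP (fun x => decide (x ≤ N)) = Multiset.countP (fun x => x ≤ N)
          (Finset.univ.val.bind fun a : Fin k =>
            Multiset.map (· + 1) (Multiset.range (nn a))) := by
        rw [hm, ← Multiset.coe_countP, Multiset.sort_eq]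
      rw [hc2, countP_multiset]
      exact hjN
    exact sorted_getD_le hms (by omega)
  rw [Matrix.charpoly, Matrix.det_apply']
  rw [Polynomial.finset_sum_coeff]
  apply Finset.dvd_sum
  intro σ _
  -- pull out the sign
  have hsign : (Equiv.Perm.sign σ : Polynomial (PowerSeries ℂ)) =
      Polynomial.C ((Equiv.Perm.sign σ : ℤ) : PowerSeries ℂ) := by
    push_cast
    simp
  rw [hsign, Polynomial.coeff_C_mul]
  apply Dvd.dvd.mul_left
  -- split product into fixed points and the rest
  set F := univ.filter (fun i : ι => σ i = i) with hF
  have hsplit : (∏ i : ι, charmatrix A (σ i) i) =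
      (∏ i ∈ F, (Polynomial.X + Polynomial.C (- A i i))) *
        Polynomial.C (∏ i ∈ Fᶜ, (- A (σ i) i)) := by
    rw [map_prod, ← Finset.prod_mul_prod_compl F]
    congr 1
    · apply Finset.prod_congr rfl
      intro i hi
      have hfix : σ i = i := (Finset.mem_filter.mp hi).2
      rw [hfix, charmatrix_apply_eq, map_neg, sub_eq_add_neg]
    · apply Finset.prod_congr rfl
      intro i hi
      have hne : σ i ≠ i := by
        have := Finset.mem_compl.mp hi
        simpa [hF] using this
      rw [charmatrix_apply_ne _ _ _ hne, map_neg]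
  rw [hsplit, Polynomial.coeff_mul_C]
  by_cases hdF : d ≤ F.card
  · rw [Finset.prod_X_add_C_coeff F _ hdF, Finset.sum_mul]
    apply Finset.dvd_sum
    intro U hU
    obtain ⟨hUF, hUcard⟩ := Finset.mem_powersetCard.mp hU
    set T := U ∪ Fᶜ with hT
    have hdisj : Disjoint U Fᶜ := by
      exact (disjoint_compl_right : Disjoint (F:Finset _) Fᶜ).mono_left hUF
    have hFcard : F.card ≤ n := by
      simpa using Finset.card_le_card (Finset.subset_univ F)
    have hTcard : T.card = j := by
      rw [hT, Finset.card_union_of_disjoint hdisj, hUcard, Finset.card_compl]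
      have e : Fintype.card ι = n := rfl
      omega
    have hfix : ∀ i ∈ U, σ i = i := fun i hi => (Finset.mem_filter.mp (hUF hi)).2
    have hprod : (∏ i ∈ U, - A i i) * (∏ i ∈ Fᶜ, - A (σ i) i) = ∏ i ∈ T, - A (σ i) i := by
      rw [hT, Finset.prod_union hdisj]
      congr 1
      apply Finset.prod_congr rfl
      intro i hi
      rw [hfix i hi]
    rw [hprod]
    -- σ maps T into T, injectively
    have hmapsto : ∀ i ∈ T, σ i ∈ T := by
      intro i hi
      rcases Finset.mem_union.mp hi with h | h
      · rw [hfix i h]; exact Finset.mem_union_left _ h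
      · apply Finset.mem_union_right
        rw [Finset.mem_compl, hF, Finset.mem_filter] at h ⊢
        simp only [Finset.mem_univ, true_and] at h ⊢
        intro hc
        exact h (σ.injective hc)
    have hbound := hkey T σ hTcard hmapsto (σ.injective.injOn)
    set Tf := T.filter (fun i => ¬ (σ i).1 < i.1) with hTf
    have h2 : (PowerSeries.X : PowerSeries ℂ) ^ Tf.card ∣ ∏ i ∈ T, - A (σ i) i := by
      have hstep1 : (PowerSeries.X : PowerSeries ℂ) ^ Tf.card ∣ ∏ i ∈ Tf, - A (σ i) i := by
        rw [← Finset.prod_const]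
        apply Finset.prod_dvd_prod_of_dvd
        intro i hi
        have := (Finset.mem_filter.mp hi).2
        exact (hAdvd _ _ this).neg_right
      refine hstep1.trans ?_
      rw [← Finset.prod_filter_mul_prod_filter_not T (fun i => ¬ (σ i).1 < i.1)]
      exact dvd_mul_right _ _
    exact (pow_dvd_pow _ hbound).trans h2
  · -- degree too small: coefficient is zero
    push_neg at hdF
    have hdeg : (∏ i ∈ F, (Polynomial.X + Polynomial.C (- A i i))).natDegree = F.card := by
      have he : ∀ x ∈ F, Polynomial.X + Polynomial.C (-A x x)
          = Polynomial.X - Polynomial.C (A x x) := fun x _ => by rw [map_neg, sub_eq_add_neg]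
      rw [Finset.prod_congr rfl he,
        Polynomial.natDegree_prod_of_monic _ _ (fun i _ => Polynomial.monic_X_sub_C _)]
      simp [Polynomial.natDegree_X_sub_C]
    rw [Polynomial.coeff_eq_zero_of_natDegree_lt (by rw [hdeg]; exact hdF), zero_mul]
    exact dvd_zero _
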